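/- arXiv:math/0606587 — 2 statements merged into one kernel-verified Lean document; each statement's English description precedes it below -/
import Mathlib

section
/- There is an absolute constant C such that for all choices of signs ±₁, ±₂ and all nonzero vectors η, ζ ∈ ℝ², the 2×2 matrix σ_{±₁,±₂}(η,ζ) := Π_{±₂}(ζ) β Π_{±₁}(η) satisfies the operator-norm bound ‖Π_{±₂}(ζ) β Π_{±₁}(η)‖ ≤ C ∠(±₁η, ±₂ζ), where ∠(a,b) ∈ [0,π] denotes the angle between the nonzero vectors a, b ∈ ℝ². -/
noncomputable section

open MeasureTheory Real
open scoped ENNReal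
open scoped RealInnerProductSpace

abbrev E2 : Type := EuclideanSpace ℝ (Fin 2)
abbrev C2 : Type := EuclideanSpace ℂ (Fin 2)

def signSet : Set ℝ := {1, -1}

/-- Space-time Fourier transform on ℝ^{1+2}. -/
def FTst {V : Type} [NormedAddCommGroup V] [NormedSpace ℂ V]
    (u : ℝ × E2 → V) (p : ℝ × E2) : V :=
  ∫ q : ℝ × E2,
    Complex.exp (-Complex.I * ((q.1 * p.1 + ⟪q.2, p.2⟫ : ℝ) : ℂ)) • u q

/-- Spatial Fourier transform on ℝ². -/
def FT2 (f : E2 → ℂ) (ξ : E2) : ℂ :=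
  ∫ x : E2, Complex.exp (-Complex.I * ((⟪x, ξ⟫ : ℝ) : ℂ)) * f x

/-- X^{s,b}_± norm; the sign is encoded by `sgn ∈ {1,-1}`. -/
def Xnorm {V : Type} [NormedAddCommGroup V] [NormedSpace ℂ V]
    (sgn s b : ℝ) (u : ℝ × E2 → V) : ℝ :=
  (∫ p : ℝ × E2,
      (1 + ‖p.2‖) ^ (2 * s) * (1 + |p.1 + sgn * ‖p.2‖|) ^ (2 * b) * ‖FTst u p‖ ^ 2)
    ^ ((1 : ℝ) / 2)

/-- X^{s,b}_± norm with homogeneous weight |ξ|^s. -/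
def XnormHom {V : Type} [NormedAddCommGroup V] [NormedSpace ℂ V]
    (sgn s b : ℝ) (u : ℝ × E2 → V) : ℝ :=
  (∫ p : ℝ × E2,
      ‖p.2‖ ^ (2 * s) * (1 + |p.1 + sgn * ‖p.2‖|) ^ (2 * b) * ‖FTst u p‖ ^ 2)
    ^ ((1 : ℝ) / 2)

/-- Wave-Sobolev H^{s,b} norm. -/
def Hnorm {V : Type} [NormedAddCommGroup V] [NormedSpace ℂ V]
    (s b : ℝ) (u : ℝ × E2 → V) : ℝ :=
  (∫ p : ℝ × E2,
      (1 + ‖p.2‖) ^ (2 * s) * (1 + |(|p.1| - ‖p.2‖)|) ^ (2 * b) * ‖FTst u p‖ ^ 2)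
    ^ ((1 : ℝ) / 2)

/-- Homogeneous Sobolev norm on ℝ². -/
def HdotNorm (s : ℝ) (f : E2 → ℂ) : ℝ :=
  (∫ ξ : E2, ‖ξ‖ ^ (2 * s) * ‖FT2 f ξ‖ ^ 2) ^ ((1 : ℝ) / 2)

def alpha1 : Matrix (Fin 2) (Fin 2) ℂ := !![0, 1; 1, 0]
def alpha2 : Matrix (Fin 2) (Fin 2) ℂ := !![0, -Complex.I; Complex.I, 0]
def diracBeta : Matrix (Fin 2) (Fin 2) ℂ := !![1, 0; 0, -1]

/-- The Dirac projection Π_±(ξ), sign encoded by `sgn ∈ {1,-1}`. -/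
def Proj (sgn : ℝ) (ξ : E2) : Matrix (Fin 2) (Fin 2) ℂ :=
  (2 : ℂ)⁻¹ • (1 + ((sgn / ‖ξ‖ : ℝ) : ℂ) •
    (((ξ 0 : ℝ) : ℂ) • alpha1 + ((ξ 1 : ℝ) : ℂ) • alpha2))

/-- Matrix acting on a vector in ℂ². -/
def matVec (A : Matrix (Fin 2) (Fin 2) ℂ) (v : C2) : C2 :=
  (WithLp.equiv 2 (Fin 2 → ℂ)).symm (A.mulVec (WithLp.equiv 2 (Fin 2 → ℂ) v))

/-- Inner product ⟨z,w⟩ = w†z on ℂ², conjugate-linear in `w`. -/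
def cdot (z w : C2) : ℂ := star (w 0) * z 0 + star (w 1) * z 1

/-- The Fourier multiplier Π_±(D). -/
def PiD (sgn : ℝ) (ψ : ℝ × E2 → C2) (p : ℝ × E2) : C2 :=
  ((2 * Real.pi) ^ (-(3 : ℝ)) : ℝ) •
    ∫ q : ℝ × E2,
      Complex.exp (Complex.I * ((p.1 * q.1 + ⟪p.2, q.2⟫ : ℝ) : ℂ)) •
        matVec (Proj sgn q.2) (FTst ψ q)

/-- The free wave S_±(t)f, sign encoded by `sgn ∈ {1,-1}`. -/
def freeWave (sgn : ℝ) (f : E2 → ℂ) (t : ℝ) (x : E2) : ℂ :=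
  (((2 * Real.pi) ^ (-(2 : ℝ)) : ℝ) : ℂ) *
    ∫ ξ : E2, Complex.exp (Complex.I * ((⟪x, ξ⟫ - sgn * t * ‖ξ‖ : ℝ) : ℂ)) * FT2 f ξ


-- Auxiliary lemmas for the null-structure bound

lemma euclid_apply' (A : Matrix (Fin 2) (Fin 2) ℂ) (x : EuclideanSpace ℂ (Fin 2)) (i : Fin 2) :
    Matrix.toEuclideanCLM (𝕜 := ℂ) A x i = A.mulVec (fun j => x j) i := by
  have h : Matrix.toEuclideanCLM (𝕜 := ℂ) A x = Matrix.toEuclideanLin A x := by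
    rw [← Matrix.coe_toEuclideanCLM_eq_toEuclideanLin]; rfl
  rw [h, Matrix.toEuclideanLin_apply]

lemma norm2_le' (y : EuclideanSpace ℂ (Fin 2)) :
    ‖y‖ ≤ ‖(y 0)‖ + ‖(y 1)‖ := by
  rw [EuclideanSpace.norm_eq, Fin.sum_univ_two]
  rw [show ‖y 0‖ = ‖(y 0)‖ from rfl, show ‖y 1‖ = ‖(y 1)‖ from rfl]
  have h0 := norm_nonneg (y 0)
  have h1 := norm_nonneg (y 1)
  rw [show ‖(y 0)‖ ^ 2 + ‖(y 1)‖ ^ 2 =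
    (‖(y 0)‖ + ‖(y 1)‖)^2 - 2*(‖(y 0)‖*‖(y 1)‖) by ring]
  calc Real.sqrt ((‖(y 0)‖ + ‖(y 1)‖)^2 - 2*(‖(y 0)‖*‖(y 1)‖))
      ≤ Real.sqrt ((‖(y 0)‖ + ‖(y 1)‖)^2) := by
        apply Real.sqrt_le_sqrt; nlinarith
    _ = ‖(y 0)‖ + ‖(y 1)‖ := Real.sqrt_sq (by positivity)

lemma comp_le' (y : EuclideanSpace ℂ (Fin 2)) (i : Fin 2) : ‖(y i)‖ ≤ ‖y‖ := by
  rw [EuclideanSpace.norm_eq, Fin.sum_univ_two]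
  rw [show ‖y 0‖ = ‖(y 0)‖ from rfl, show ‖y 1‖ = ‖(y 1)‖ from rfl]
  rw [Real.le_sqrt (norm_nonneg _)]
  · fin_cases i <;> simp <;>
      nlinarith [sq_nonneg (‖(y 0)‖), sq_nonneg (‖(y 1)‖)]
  · positivity

lemma opnorm_fin_two_le (a b c d : ℂ) :
    ‖Matrix.toEuclideanCLM (𝕜 := ℂ) !![a,b;c,d]‖ ≤
      ‖a‖ + ‖b‖ + ‖c‖ + ‖d‖ := by
  apply ContinuousLinearMap.opNorm_le_bound _ (by positivity)
  intro x
  have hx0 := comp_le' x 0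
  have hx1 := comp_le' x 1
  set y := Matrix.toEuclideanCLM (𝕜 := ℂ) !![a,b;c,d] x with hy
  have hy0 : y 0 = a * x 0 + b * x 1 := by
    rw [hy, euclid_apply']; simp [Matrix.mulVec, dotProduct, Fin.sum_univ_two, Matrix.vecHead, Matrix.vecTail]
  have hy1 : y 1 = c * x 0 + d * x 1 := by
    rw [hy, euclid_apply']; simp [Matrix.mulVec, dotProduct, Fin.sum_univ_two, Matrix.vecHead, Matrix.vecTail]
  calc ‖y‖ ≤ ‖(y 0)‖ + ‖(y 1)‖ := norm2_le' y
    _ ≤ (‖a‖ * ‖(x 0)‖ + ‖b‖ * ‖(x 1)‖) +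
        (‖c‖ * ‖(x 0)‖ + ‖d‖ * ‖(x 1)‖) := by
        rw [hy0, hy1]
        gcongr <;> [exact (norm_add_le _ _).trans (by rw [norm_mul, norm_mul]);
          exact (norm_add_le _ _).trans (by rw [norm_mul, norm_mul])]
    _ ≤ (‖a‖ + ‖b‖ + ‖c‖ + ‖d‖) * ‖x‖ := by
        have := norm_nonneg a
        have := norm_nonneg b
        have := norm_nonneg c
        have := norm_nonneg d
        nlinarith [norm_nonneg (x 0), norm_nonneg (x 1)]

lemma proj_eq' (sgn : ℝ) (ξ : E2) :
    Proj sgn ξ = !![2⁻¹, ((sgn / ‖ξ‖ * ξ 0 : ℝ) : ℂ)/2 - ((sgn / ‖ξ‖ * ξ 1 : ℝ) : ℂ)*Complex.I/2;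
      ((sgn / ‖ξ‖ * ξ 0 : ℝ) : ℂ)/2 + ((sgn / ‖ξ‖ * ξ 1 : ℝ) : ℂ)*Complex.I/2, 2⁻¹] := by
  ext i j
  fin_cases i <;> fin_cases j <;>
    simp [Proj, alpha1, alpha2, Matrix.one_apply] <;> push_cast <;> ring

lemma prod_entries' (a b c d : ℝ) :
    !![2⁻¹, (c:ℂ)/2 - (d:ℂ)*Complex.I/2; (c:ℂ)/2 + (d:ℂ)*Complex.I/2, 2⁻¹] * diracBeta *
      !![2⁻¹, (a:ℂ)/2 - (b:ℂ)*Complex.I/2; (a:ℂ)/2 + (b:ℂ)*Complex.I/2, 2⁻¹] =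
    !![(1 - ((c:ℂ)-d*Complex.I)*((a:ℂ)+b*Complex.I))/4,
        (((a:ℂ)-b*Complex.I)-((c:ℂ)-d*Complex.I))/4;
       (((c:ℂ)+d*Complex.I)-((a:ℂ)+b*Complex.I))/4,
        (((c:ℂ)+d*Complex.I)*((a:ℂ)-b*Complex.I)-1)/4] := by
  ext i j
  fin_cases i <;> fin_cases j <;>
    simp [diracBeta, Matrix.mul_apply, Fin.sum_univ_two] <;> ring

lemma abs_unit' (c d : ℝ) (hv : c^2 + d^2 = 1) : ‖((c:ℂ) + d*Complex.I)‖ = 1 := by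
  have h2 : (‖((c:ℂ) + d*Complex.I)‖)^2 = 1 := by
    rw [Complex.sq_norm, Complex.normSq_apply]
    simp
    nlinarith
  nlinarith [norm_nonneg ((c:ℂ) + d*Complex.I)]

lemma conj_eq' (c d : ℝ) : (starRingEnd ℂ) ((c:ℂ) + d*Complex.I) = (c:ℂ) - d*Complex.I := by
  simp [Complex.ext_iff]

lemma key_sum' (a b c d : ℝ) (hu : a^2+b^2 = 1) (hv : c^2+d^2 = 1) :
    ‖((1 - ((c:ℂ)-d*Complex.I)*((a:ℂ)+b*Complex.I))/4)‖
  + ‖((((a:ℂ)-b*Complex.I)-((c:ℂ)-d*Complex.I))/4)‖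
  + ‖((((c:ℂ)+d*Complex.I)-((a:ℂ)+b*Complex.I))/4)‖
  + ‖((((c:ℂ)+d*Complex.I)*((a:ℂ)-b*Complex.I)-1)/4)‖
  = ‖(((c:ℂ)+d*Complex.I)-((a:ℂ)+b*Complex.I))‖ := by
  set u : ℂ := (a:ℂ) + b*Complex.I with hu'
  set v : ℂ := (c:ℂ) + d*Complex.I with hv'
  have huC : ((a:ℂ))^2 + (b:ℂ)^2 = 1 := by exact_mod_cast congrArg (Complex.ofReal) hu
  have hvC : ((c:ℂ))^2 + (d:ℂ)^2 = 1 := by exact_mod_cast congrArg (Complex.ofReal) hv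
  have hau : ‖u‖ = 1 := abs_unit' a b hu
  have hav : ‖v‖ = 1 := abs_unit' c d hv
  have hauc : ‖((a:ℂ) - b*Complex.I)‖ = 1 := by
    rw [← conj_eq', Complex.norm_conj]; exact hau
  have havc : ‖((c:ℂ) - d*Complex.I)‖ = 1 := by
    rw [← conj_eq', Complex.norm_conj]; exact hav
  have e1 : 1 - ((c:ℂ)-d*Complex.I)*u = ((c:ℂ)-d*Complex.I) * (v - u) := by
    rw [hu', hv']; linear_combination (-1:ℂ)*hvC + (d:ℂ)^2*Complex.I_sq
  have e2 : ((a:ℂ)-b*Complex.I)-((c:ℂ)-d*Complex.I) = (starRingEnd ℂ) (u - v) := by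
    rw [map_sub, conj_eq', conj_eq']
  have e4 : v*((a:ℂ)-b*Complex.I)-1 = ((a:ℂ)-b*Complex.I) * (v - u) := by
    rw [hu', hv']; linear_combination huC - (b:ℂ)^2*Complex.I_sq
  rw [e1, e2, e4]
  rw [norm_div, norm_div, norm_div, norm_div, norm_mul, norm_mul, Complex.norm_conj,
    havc, hauc, norm_sub_rev u v]
  simp [Complex.norm_ofNat]
  ring


set_option maxHeartbeats 2000000 in
/-- Lemma 1 of the paper (null structure): the operator-norm bound
‖Π_{±₂}(ζ) β Π_{±₁}(η)‖ ≤ C ∠(±₁η, ±₂ζ) for nonzero η, ζ ∈ ℝ². -/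

theorem nullform_symbol_bound :
    ∃ C : ℝ,
      ∀ sgn1 ∈ signSet, ∀ sgn2 ∈ signSet,
        ∀ η ζ : E2, η ≠ 0 → ζ ≠ 0 →
          ‖Matrix.toEuclideanCLM (𝕜 := ℂ) (Proj sgn2 ζ * diracBeta * Proj sgn1 η)‖
            ≤ C * InnerProductGeometry.angle (sgn1 • η) (sgn2 • ζ) := by
  refine ⟨1, ?_⟩
  intro sgn1 hs1 sgn2 hs2 η ζ hη hζ
  have hs1' : sgn1 = 1 ∨ sgn1 = -1 := hs1
  have hs2' : sgn2 = 1 ∨ sgn2 = -1 := hs2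
  have hs1sq : sgn1^2 = 1 := by rcases hs1' with h | h <;> rw [h] <;> norm_num
  have hs2sq : sgn2^2 = 1 := by rcases hs2' with h | h <;> rw [h] <;> norm_num
  have habs1 : |sgn1| = 1 := by rcases hs1' with h | h <;> rw [h] <;> norm_num
  have habs2 : |sgn2| = 1 := by rcases hs2' with h | h <;> rw [h] <;> norm_num
  have hNη : ‖η‖ ≠ 0 := norm_ne_zero_iff.mpr hη
  have hNζ : ‖ζ‖ ≠ 0 := norm_ne_zero_iff.mpr hζ
  have hNη2 : ‖η‖^2 = η 0^2 + η 1^2 := by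
    rw [EuclideanSpace.norm_eq, Fin.sum_univ_two, Real.sq_sqrt (by positivity)]
    simp [sq_abs]
  have hNζ2 : ‖ζ‖^2 = ζ 0^2 + ζ 1^2 := by
    rw [EuclideanSpace.norm_eq, Fin.sum_univ_two, Real.sq_sqrt (by positivity)]
    simp [sq_abs]
  set a : ℝ := sgn1 / ‖η‖ * η 0 with ha
  set b : ℝ := sgn1 / ‖η‖ * η 1 with hb
  set c : ℝ := sgn2 / ‖ζ‖ * ζ 0 with hc
  set d : ℝ := sgn2 / ‖ζ‖ * ζ 1 with hd
  have hu : a^2 + b^2 = 1 := by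
    rw [ha, hb]; field_simp; nlinarith [hNη2, hs1sq]
  have hv : c^2 + d^2 = 1 := by
    rw [hc, hd]; field_simp; nlinarith [hNζ2, hs2sq]
  set θ : ℝ := InnerProductGeometry.angle (sgn1 • η) (sgn2 • ζ) with hθ
  have hθ0 : 0 ≤ θ := InnerProductGeometry.angle_nonneg _ _
  have hθpi : θ ≤ π := InnerProductGeometry.angle_le_pi _ _
  -- cos θ = a*c + b*d
  have hinner : ⟪η, ζ⟫ = η 0 * ζ 0 + η 1 * ζ 1 := by
    simp [PiLp.inner_apply, Fin.sum_univ_two, RCLike.inner_apply, conj_trivial]; ring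
  have hcos : Real.cos θ = a*c + b*d := by
    rw [hθ, InnerProductGeometry.cos_angle, real_inner_smul_left, real_inner_smul_right,
      norm_smul, norm_smul, hinner]
    rw [show ‖sgn1‖ = |sgn1| from rfl, show ‖sgn2‖ = |sgn2| from rfl, habs1, habs2]
    rw [ha, hb, hc, hd]
    field_simp
  -- chord bound
  set m : ℝ := ‖(((c:ℂ)+d*Complex.I)-((a:ℂ)+b*Complex.I))‖ with hm
  have hm2 : m^2 = 2 - 2*(a*c + b*d) := by
    rw [hm, Complex.sq_norm, Complex.normSq_apply]
    simp
    nlinarith [hu, hv]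
  have hsinsq : Real.sin (θ/2)^2 = (1 - Real.cos θ)/2 := by
    rw [← sq_abs, Real.abs_sin_half, Real.sq_sqrt]
    nlinarith [Real.cos_le_one θ]
  have hsinle : Real.sin (θ/2) ≤ θ/2 := Real.sin_le (by linarith)
  have hsinnn : 0 ≤ Real.sin (θ/2) :=
    Real.sin_nonneg_of_nonneg_of_le_pi (by linarith) (by linarith [Real.pi_pos])
  have hmθ : m ≤ θ := by
    have hm0 : 0 ≤ m := norm_nonneg _
    nlinarith [hm2, hsinsq, hcos]
  -- matrix computation
  have hmat : Proj sgn2 ζ * diracBeta * Proj sgn1 η =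
      !![(1 - ((c:ℂ)-d*Complex.I)*((a:ℂ)+b*Complex.I))/4,
          (((a:ℂ)-b*Complex.I)-((c:ℂ)-d*Complex.I))/4;
         (((c:ℂ)+d*Complex.I)-((a:ℂ)+b*Complex.I))/4,
          (((c:ℂ)+d*Complex.I)*((a:ℂ)-b*Complex.I)-1)/4] := by
    rw [proj_eq' sgn1 η, proj_eq' sgn2 ζ, ← ha, ← hb, ← hc, ← hd, prod_entries' a b c d]
  rw [hmat, one_mul]
  refine le_trans (opnorm_fin_two_le _ _ _ _) ?_
  rw [key_sum' a b c d hu hv]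
  exact hmθ


end
end

section
/- There exist absolute constants 0 < c ≤ C such that for all η, ξ ∈ ℝ² with η ≠ 0 and η ≠ ξ, setting θ₊ = ∠(η, η-ξ), θ₋ = ∠(η, ξ-η), ρ₊ = |ξ| - ||η| - |η-ξ||, and ρ₋ = |η| + |η-ξ| - |ξ|, one has c θ₊² ≤ |ξ| ρ₊ / (|η| |η-ξ|) ≤ C θ₊² and c θ₋² ≤ (|η| + |η-ξ|) ρ₋ / (|η| |η-ξ|) ≤ C θ₋². -/
noncomputable section

open MeasureTheory Real
open scoped ENNReal
open scoped RealInnerProductSpace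

/-- If `D*(1-cos θ) ≤ N ≤ 2*D*(1-cos θ)` with `0 ≤ θ ≤ π`, `0 < D`, then
`(2/π²) θ² ≤ N/D ≤ 2 θ²`. -/
lemma angle_aux {θ D N : ℝ} (h0 : 0 ≤ θ) (hπ : θ ≤ π) (hD : 0 < D)
    (h1 : D * (1 - Real.cos θ) ≤ N) (h2 : N ≤ 2 * D * (1 - Real.cos θ)) :
    2 / π ^ 2 * θ ^ 2 ≤ N / D ∧ N / D ≤ 2 * θ ^ 2 := by
  have habs : |θ| ≤ π := by rwa [abs_of_nonneg h0]
  have hlow : Real.cos θ ≤ 1 - 2 / π ^ 2 * θ ^ 2 :=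
    Real.cos_le_one_sub_mul_cos_sq habs
  have hup : 1 - θ ^ 2 / 2 ≤ Real.cos θ := Real.one_sub_sq_div_two_le_cos
  constructor
  · rw [le_div_iff₀ hD]
    nlinarith
  · rw [div_le_iff₀ hD]
    nlinarith

/-- The angle estimates (4.4) of the paper:
θ₊² ∼ |ξ|ρ₊/(|η||η-ξ|) and θ₋² ∼ (|η|+|η-ξ|)ρ₋/(|η||η-ξ|). -/
theorem angle_estimates :
    ∃ c C : ℝ, 0 < c ∧ c ≤ C ∧
      ∀ η ξ : E2, η ≠ 0 → η ≠ ξ →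
        (c * InnerProductGeometry.angle η (η - ξ) ^ 2
            ≤ ‖ξ‖ * (‖ξ‖ - |(‖η‖ - ‖η - ξ‖)|) / (‖η‖ * ‖η - ξ‖) ∧
          ‖ξ‖ * (‖ξ‖ - |(‖η‖ - ‖η - ξ‖)|) / (‖η‖ * ‖η - ξ‖)
            ≤ C * InnerProductGeometry.angle η (η - ξ) ^ 2) ∧
        (c * InnerProductGeometry.angle η (ξ - η) ^ 2
            ≤ (‖η‖ + ‖η - ξ‖) * (‖η‖ + ‖η - ξ‖ - ‖ξ‖) / (‖η‖ * ‖η - ξ‖) ∧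
          (‖η‖ + ‖η - ξ‖) * (‖η‖ + ‖η - ξ‖ - ‖ξ‖) / (‖η‖ * ‖η - ξ‖)
            ≤ C * InnerProductGeometry.angle η (ξ - η) ^ 2) := by
  refine ⟨2 / π ^ 2, 2, by positivity, ?_, ?_⟩
  · have hπ : 1 ≤ π ^ 2 := by nlinarith [Real.pi_gt_three]
    rw [div_le_iff₀ (by positivity)]
    nlinarith
  · intro η ξ hη hηξ
    have hb : η - ξ ≠ 0 := sub_ne_zero.mpr hηξ
    set A := ‖η‖ with hA'
    set B := ‖η - ξ‖ with hB'
    have hA : 0 < A := norm_pos_iff.mpr hη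
    have hB : 0 < B := norm_pos_iff.mpr hb
    set θ := InnerProductGeometry.angle η (η - ξ) with hθ'
    have hθ0 : 0 ≤ θ := InnerProductGeometry.angle_nonneg _ _
    have hθπ : θ ≤ π := InnerProductGeometry.angle_le_pi _ _
    have hcos : A * B * Real.cos θ = ⟪η, η - ξ⟫ := by
      rw [hθ', InnerProductGeometry.cos_angle, ← hA', ← hB']
      field_simp
    have hξsq : ‖ξ‖ ^ 2 = A ^ 2 - 2 * ⟪η, η - ξ⟫ + B ^ 2 := by
      have := norm_sub_sq_real η (η - ξ)
      simpa using this
    have hs1 : |A - B| ≤ ‖ξ‖ := by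
      have := abs_norm_sub_norm_le η (η - ξ)
      simpa using this
    have hs0 : 0 ≤ |A - B| := abs_nonneg _
    have hssq : |A - B| ^ 2 = (A - B) ^ 2 := sq_abs _
    have hξL : ‖ξ‖ ≤ A + B := by
      have := norm_sub_le η (η - ξ)
      simpa using this
    have hθm : InnerProductGeometry.angle η (ξ - η) = π - θ := by
      rw [hθ', show ξ - η = -(η - ξ) by abel, InnerProductGeometry.angle_neg_right]
    constructor
    · exact angle_aux hθ0 hθπ (by positivity)
        (by nlinarith [sq_nonneg (‖ξ‖ - |A - B|)]) (by nlinarith)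
    · rw [hθm]
      have hcm : Real.cos (π - θ) = -Real.cos θ := Real.cos_pi_sub θ
      refine angle_aux (by linarith) (by linarith) (by positivity) ?_ ?_
      · rw [hcm]; nlinarith [sq_nonneg (A + B - ‖ξ‖)]
      · rw [hcm]; nlinarith

end
end
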